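/- In the formal power series ring $\mathbb{Q}[[x,Q]]$, the double series $-\sum_{j,k\ge0,\,j+k>0} x^{j+k}\frac{(k+2j-1)!}{j!\,j!\,k!}Q^j$ equals $\log(1-x) - \sum_{j=1}^{\infty}\frac{(2j-1)!}{j!\,j!}\frac{(Qx)^j}{(1-x)^{2j}}$. -/

import Mathlib

open PowerSeries Finset

/-- The inner ring `ℚ[[Q]]`. -/
noncomputable abbrev RQ : Type := PowerSeries ℚ

/-- The variable `Q`. -/
noncomputable def QQ : RQ := PowerSeries.X

/-- The double series `-∑_{j,k≥0, j+k>0} x^{j+k} (k+2j-1)!/(j!j!k!) Q^j`,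
as an element of `ℚ[[Q]][[x]]` (the coefficient of `x^n` collects the pairs
`(j,k)` with `j+k = n`; for `j = 0` the factor `(k-1)!/k!` equals `1/k`). -/
noncomputable def lhsSeries : PowerSeries RQ :=
  PowerSeries.mk fun n =>
    -∑ p ∈ Finset.HasAntidiagonal.antidiagonal n,
      if 0 < p.1 + p.2 then
        PowerSeries.C (R := ℚ) (((p.2 + 2 * p.1 - 1).factorial : ℚ) /
          ((p.1.factorial : ℚ) ^ 2 * (p.2.factorial : ℚ))) * QQ ^ p.1
      else 0

/-- `log(1-x) = -∑_{n≥1} x^n/n`. -/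
noncomputable def logOneSubX : PowerSeries RQ :=
  PowerSeries.mk fun n => PowerSeries.C (R := ℚ) (if n = 0 then 0 else -(1 / (n : ℚ)))

/-- The `j`-th term `(2j-1)!/(j!j!) · (Qx)^j/(1-x)^{2j}`, with
`1/(1-x)^{2j} = ∑_{k≥0} C(2j+k-1, k) x^k`. -/
noncomputable def termSeries (j : ℕ) : PowerSeries RQ :=
  PowerSeries.C (R := RQ) (PowerSeries.C (R := ℚ) (((2 * j - 1).factorial : ℚ) / ((j.factorial : ℚ) ^ 2))) *
    PowerSeries.C (R := RQ) (QQ ^ j) * PowerSeries.X ^ j *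
    PowerSeries.mk fun k => ((2 * j + k - 1).choose k : RQ)

lemma coeff_termSeries (n j : ℕ) (h1 : 1 ≤ j) (h2 : j ≤ n) :
    PowerSeries.coeff (R := RQ) n (termSeries j)
      = PowerSeries.C (R := ℚ) ((((n - j) + 2 * j - 1).factorial : ℚ) /
          ((j.factorial : ℚ) ^ 2 * ((n - j).factorial : ℚ))) * QQ ^ j := by
  have hre : termSeries j
      = PowerSeries.C (R := RQ)
          (PowerSeries.C (R := ℚ) (((2 * j - 1).factorial : ℚ) / ((j.factorial : ℚ) ^ 2)) * QQ ^ j) *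
        (PowerSeries.X ^ j * PowerSeries.mk fun k => ((2 * j + k - 1).choose k : RQ)) := by
    rw [termSeries, map_mul]; ring
  rw [hre, coeff_C_mul, coeff_X_pow_mul', if_pos h2, coeff_mk]
  set a := n - j with ha
  set b := 2 * j - 1 with hb
  have hab : 2 * j + a - 1 = a + b := by omega
  have hab2 : a + 2 * j - 1 = a + b := by omega
  rw [hab, hab2]
  have hnat : (a + b).choose b * a.factorial * b.factorial = (a + b).factorial :=
    Nat.add_choose_mul_factorial_mul_factorial a b
  have hsymm : (a + b).choose a = (a + b).choose b := Nat.choose_symm_add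
  have hcast : ((a + b).factorial : ℚ)
      = ((a + b).choose a : ℚ) * a.factorial * b.factorial := by
    rw [hsymm]; exact_mod_cast hnat.symm
  have hQ : (((a + b).choose a : ℕ) : RQ) = PowerSeries.C (R := ℚ) (((a + b).choose a : ℕ) : ℚ) := by
    simp
  rw [hQ, mul_assoc, mul_comm (QQ ^ j), ← mul_assoc, ← map_mul]
  have hja : (j.factorial : ℚ) ≠ 0 := Nat.cast_ne_zero.mpr (Nat.factorial_ne_zero j)
  have haf : (a.factorial : ℚ) ≠ 0 := Nat.cast_ne_zero.mpr (Nat.factorial_ne_zero a)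
  have hrat : ((b.factorial : ℚ) / (j.factorial : ℚ) ^ 2) * (((a + b).choose a : ℕ) : ℚ)
      = ((a + b).factorial : ℚ) / ((j.factorial : ℚ) ^ 2 * (a.factorial : ℚ)) := by
    rw [hcast]
    field_simp
  rw [hrat]

/-- The double series `-∑_{j,k≥0, j+k>0} x^{j+k} (k+2j-1)!/(j!j!k!) Q^j` equals
`log(1-x) - ∑_{j≥1} (2j-1)!/(j!j!) (Qx)^j/(1-x)^{2j}` (coefficientwise; since
the `j`-th term is divisible by `x^j`, only `j ≤ n` contribute to the `x^n`
coefficient). -/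
theorem double_series_eq_log_sub_sum (n : ℕ) :
    PowerSeries.coeff (R := RQ) n lhsSeries
      = PowerSeries.coeff (R := RQ) n (logOneSubX - ∑ j ∈ Finset.Icc 1 n, termSeries j) := by
  rcases Nat.eq_zero_or_pos n with hn | hn
  · subst hn; simp [lhsSeries, logOneSubX]
  rw [map_sub, map_sum]
  rw [Finset.sum_congr rfl fun j hj => coeff_termSeries n j (Finset.mem_Icc.mp hj).1
    (Finset.mem_Icc.mp hj).2]
  simp only [lhsSeries, logOneSubX, coeff_mk]
  rw [Finset.Nat.sum_antidiagonal_eq_sum_range_succ_mk]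
  have hite : ∀ j ∈ Finset.range (n + 1),
      (if 0 < j + (n - j) then
        PowerSeries.C (R := ℚ) ((((n - j) + 2 * j - 1).factorial : ℚ) /
          ((j.factorial : ℚ) ^ 2 * ((n - j).factorial : ℚ))) * QQ ^ j
      else 0)
      = PowerSeries.C (R := ℚ) ((((n - j) + 2 * j - 1).factorial : ℚ) /
          ((j.factorial : ℚ) ^ 2 * ((n - j).factorial : ℚ))) * QQ ^ j := by
    intro j hj
    rw [if_pos]
    rw [Finset.mem_range] at hj
    omega
  rw [Finset.sum_congr rfl hite]
  have hsplit : Finset.range (n + 1) = insert 0 (Finset.Icc 1 n) := by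
    ext x
    simp only [Finset.mem_range, Finset.mem_insert, Finset.mem_Icc]
    omega
  rw [hsplit, Finset.sum_insert (by simp)]
  rw [if_neg hn.ne']
  have h0 : PowerSeries.C (R := ℚ) (((n - 0) + 2 * 0 - 1).factorial /
      ((Nat.factorial 0 : ℚ) ^ 2 * ((n - 0).factorial : ℚ))) * QQ ^ 0
      = PowerSeries.C (R := ℚ) (1 / (n : ℚ)) := by
    simp only [Nat.sub_zero, mul_zero, Nat.add_zero, pow_zero, mul_one, Nat.factorial_zero,
      Nat.cast_one, one_pow, one_mul]
    congr 1
    have hfac : n.factorial = n * (n - 1).factorial := by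
      cases n with
      | zero => omega
      | succ m => simp [Nat.factorial_succ, Nat.succ_sub_one]
    rw [hfac]
    have hA : ((n - 1).factorial : ℚ) ≠ 0 := Nat.cast_ne_zero.mpr (Nat.factorial_ne_zero _)
    have hB : (n : ℚ) ≠ 0 := Nat.cast_ne_zero.mpr hn.ne'
    push_cast
    field_simp
  rw [h0, neg_add, map_neg]
  ring
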